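/- Let m ≥ 2 and M(ξ) = -((m-1)/m) · (-ξ_1)^{m/(m-1)} / ξ_2^{1/(m-1)} defined on the open cone where ξ_1 < 0 and ξ_2 > 0. Then the Hessian matrix of M has rank exactly one at every point of this cone. -/

import Mathlib

open Real Filter

/-- The phase `M(ξ) = -((m-1)/m) (-ξ₁)^{m/(m-1)} / ξ₂^{1/(m-1)}` on the cone
`ξ₁ < 0, ξ₂ > 0`, written as a function of the two coordinates. -/
noncomputable def phaseM (m : ℕ) (a b : ℝ) : ℝ :=
  -((m - 1 : ℝ) / m) * (-a) ^ ((m : ℝ) / (m - 1)) / b ^ ((1 : ℝ) / (m - 1))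

/-- First partial derivative in the first variable. -/
noncomputable def pd1 (f : ℝ → ℝ → ℝ) (a b : ℝ) : ℝ := deriv (fun x => f x b) a

/-- First partial derivative in the second variable. -/
noncomputable def pd2 (f : ℝ → ℝ → ℝ) (a b : ℝ) : ℝ := deriv (fun y => f a y) b

/-- The Hessian matrix of `f : ℝ → ℝ → ℝ` at `(a, b)`. -/
noncomputable def hessian (f : ℝ → ℝ → ℝ) (a b : ℝ) : Matrix (Fin 2) (Fin 2) ℝ :=
  !![pd1 (pd1 f) a b, pd2 (pd1 f) a b; pd1 (pd2 f) a b, pd2 (pd2 f) a b]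

lemma hasDerivAt_neg_rpow (p : ℝ) {x : ℝ} (hx : x < 0) :
    HasDerivAt (fun x : ℝ => (-x) ^ p) (-(p * (-x) ^ (p - 1))) x := by
  have h := Real.hasDerivAt_rpow_const (x := -x) (p := p) (Or.inl (by linarith))
  have h2 := h.comp x (hasDerivAt_neg x)
  simpa [mul_comm, Function.comp_def] using h2

lemma hasDerivAt_const_div_rpow (C q : ℝ) {b : ℝ} (hb : 0 < b) :
    HasDerivAt (fun y : ℝ => C / y ^ q) (-(C * q / b ^ (q + 1))) b := by
  have h2 : HasDerivAt (fun y : ℝ => y ^ q) (q * b ^ (q - 1)) b :=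
    Real.hasDerivAt_rpow_const (Or.inl hb.ne')
  have h := (hasDerivAt_const b C).div h2 (by positivity)
  refine h.congr_deriv ?_
  have e1 : (b ^ q) ^ 2 = b ^ (q + 1) * b ^ (q - 1) := by
    rw [sq, ← Real.rpow_add hb, ← Real.rpow_add hb]; congr 1; ring
  have h1 : b ^ (q + 1) ≠ 0 := by positivity
  have h3 : b ^ (q - 1) ≠ 0 := by positivity
  rw [e1]; field_simp; ring

lemma hm1R {m : ℕ} (hm : 2 ≤ m) : (1:ℝ) ≤ (m:ℝ) - 1 := by
  have : (2:ℝ) ≤ m := by exact_mod_cast hm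
  linarith

lemma pd1_phaseM {m : ℕ} (hm : 2 ≤ m) {a b : ℝ} (ha : a < 0) (hb : 0 < b) :
    pd1 (phaseM m) a b = (-a) ^ ((1:ℝ)/((m:ℝ)-1)) / b ^ ((1:ℝ)/((m:ℝ)-1)) := by
  have h1 := hm1R hm
  have hm0 : (m:ℝ) ≠ 0 := by positivity
  have hm1' : (m:ℝ) - 1 ≠ 0 := by linarith
  have hDA : HasDerivAt (fun x : ℝ => phaseM m x b)
      ((-(((m:ℝ)-1)/m)) * (-(((m:ℝ)/((m:ℝ)-1)) * (-a) ^ ((m:ℝ)/((m:ℝ)-1) - 1)))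
        / b ^ ((1:ℝ)/((m:ℝ)-1))) a := by
    unfold phaseM
    exact ((hasDerivAt_neg_rpow _ ha).const_mul _).div_const _
  rw [pd1, hDA.deriv]
  have h2 : (m:ℝ)/((m:ℝ)-1) - 1 = 1/((m:ℝ)-1) := by field_simp; ring
  rw [h2]
  have hB : b ^ ((1:ℝ)/((m:ℝ)-1)) ≠ 0 := by positivity
  field_simp

lemma pd2_phaseM {m : ℕ} (hm : 2 ≤ m) {a b : ℝ} (ha : a < 0) (hb : 0 < b) :
    pd2 (phaseM m) a b = (-a) ^ ((m:ℝ)/((m:ℝ)-1)) / ((m:ℝ) * b ^ ((m:ℝ)/((m:ℝ)-1))) := by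
  have h1 := hm1R hm
  have hm0 : (m:ℝ) ≠ 0 := by positivity
  have hm1' : (m:ℝ) - 1 ≠ 0 := by linarith
  have hDA := hasDerivAt_const_div_rpow
    (-(((m:ℝ)-1)/m) * (-a) ^ ((m:ℝ)/((m:ℝ)-1))) ((1:ℝ)/((m:ℝ)-1)) hb
  rw [pd2, (by unfold phaseM; rfl :
    (fun y => phaseM m a y)
      = fun y => (-(((m:ℝ)-1)/m) * (-a) ^ ((m:ℝ)/((m:ℝ)-1))) / y ^ ((1:ℝ)/((m:ℝ)-1))),
    hDA.deriv]
  have h2 : (1:ℝ)/((m:ℝ)-1) + 1 = (m:ℝ)/((m:ℝ)-1) := by field_simp; ring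
  rw [h2]
  have hB : b ^ ((m:ℝ)/((m:ℝ)-1)) ≠ 0 := by positivity
  have hX : (0:ℝ) < (-a) ^ ((m:ℝ)/((m:ℝ)-1)) := Real.rpow_pos_of_pos (by linarith) _
  field_simp

lemma pd1_pd1_phaseM {m : ℕ} (hm : 2 ≤ m) {a b : ℝ} (ha : a < 0) (hb : 0 < b) :
    pd1 (pd1 (phaseM m)) a b
    = -(1/((m:ℝ)-1) * (-a) ^ ((1:ℝ)/((m:ℝ)-1) - 1) / b ^ ((1:ℝ)/((m:ℝ)-1))) := by
  have hev : (fun x => pd1 (phaseM m) x b)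
      =ᶠ[nhds a] fun x => (-x) ^ ((1:ℝ)/((m:ℝ)-1)) / b ^ ((1:ℝ)/((m:ℝ)-1)) := by
    filter_upwards [Iio_mem_nhds ha] with x hx
    exact pd1_phaseM hm hx hb
  rw [pd1, hev.deriv_eq, ((hasDerivAt_neg_rpow _ ha).div_const _).deriv]
  rw [neg_div]

lemma pd2_pd1_phaseM {m : ℕ} (hm : 2 ≤ m) {a b : ℝ} (ha : a < 0) (hb : 0 < b) :
    pd2 (pd1 (phaseM m)) a b
    = -(1/((m:ℝ)-1) * (-a) ^ ((1:ℝ)/((m:ℝ)-1)) / b ^ ((1:ℝ)/((m:ℝ)-1) + 1)) := by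
  have hev : (fun y => pd1 (phaseM m) a y)
      =ᶠ[nhds b] fun y => (-a) ^ ((1:ℝ)/((m:ℝ)-1)) / y ^ ((1:ℝ)/((m:ℝ)-1)) := by
    filter_upwards [Ioi_mem_nhds hb] with y hy
    exact pd1_phaseM hm ha hy
  rw [pd2, hev.deriv_eq, (hasDerivAt_const_div_rpow _ _ hb).deriv]
  ring

lemma pd1_pd2_phaseM {m : ℕ} (hm : 2 ≤ m) {a b : ℝ} (ha : a < 0) (hb : 0 < b) :
    pd1 (pd2 (phaseM m)) a b
    = -(1/((m:ℝ)-1) * (-a) ^ ((1:ℝ)/((m:ℝ)-1)) / b ^ ((1:ℝ)/((m:ℝ)-1) + 1)) := by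
  have h1 := hm1R hm
  have hm0 : (m:ℝ) ≠ 0 := by positivity
  have hm1' : (m:ℝ) - 1 ≠ 0 := by linarith
  have hev : (fun x => pd2 (phaseM m) x b)
      =ᶠ[nhds a] fun x => (-x) ^ ((m:ℝ)/((m:ℝ)-1)) / ((m:ℝ) * b ^ ((m:ℝ)/((m:ℝ)-1))) := by
    filter_upwards [Iio_mem_nhds ha] with x hx
    exact pd2_phaseM hm hx hb
  rw [pd1, hev.deriv_eq, ((hasDerivAt_neg_rpow _ ha).div_const _).deriv]
  have e1 : (m:ℝ)/((m:ℝ)-1) - 1 = 1/((m:ℝ)-1) := by field_simp; ring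
  have e2 : (m:ℝ)/((m:ℝ)-1) = 1/((m:ℝ)-1) + 1 := by field_simp; ring
  rw [e1, e2]
  have hB : b ^ ((1:ℝ)/((m:ℝ)-1) + 1) ≠ 0 := by positivity
  field_simp
  ring

lemma pd2_pd2_phaseM {m : ℕ} (hm : 2 ≤ m) {a b : ℝ} (ha : a < 0) (hb : 0 < b) :
    pd2 (pd2 (phaseM m)) a b
    = -(1/((m:ℝ)-1) * (-a) ^ ((1:ℝ)/((m:ℝ)-1) + 1) / b ^ ((1:ℝ)/((m:ℝ)-1) + 2)) := by
  have h1 := hm1R hm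
  have hm0 : (m:ℝ) ≠ 0 := by positivity
  have hm1' : (m:ℝ) - 1 ≠ 0 := by linarith
  have hev : (fun y => pd2 (phaseM m) a y)
      =ᶠ[nhds b] fun y => ((-a) ^ ((m:ℝ)/((m:ℝ)-1)) / (m:ℝ)) / y ^ ((m:ℝ)/((m:ℝ)-1)) := by
    filter_upwards [Ioi_mem_nhds hb] with y hy
    rw [pd2_phaseM hm ha hy, div_div]
  rw [pd2, hev.deriv_eq, (hasDerivAt_const_div_rpow _ _ hb).deriv]
  have e2 : (m:ℝ)/((m:ℝ)-1) = 1/((m:ℝ)-1) + 1 := by field_simp; ring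
  rw [e2]
  have hB : b ^ ((1:ℝ)/((m:ℝ)-1) + 1 + 1) ≠ 0 := by positivity
  have e3 : (1:ℝ)/((m:ℝ)-1) + 1 + 1 = 1/((m:ℝ)-1) + 2 := by ring
  rw [e3]
  have hB2 : b ^ ((1:ℝ)/((m:ℝ)-1) + 2) ≠ 0 := by positivity
  field_simp
  ring

lemma rank_one_aux (A B C : ℝ) (hA : A ≠ 0) (h : A * C = B * B) :
    (!![A, B; B, C] : Matrix (Fin 2) (Fin 2) ℝ).rank = 1 := by
  have hfac : (!![A, B; B, C] : Matrix (Fin 2) (Fin 2) ℝ) =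
      (!![A; B] : Matrix (Fin 2) (Fin 1) ℝ) * !![1, B / A] := by
    ext i j
    fin_cases i <;> fin_cases j <;>
      simp [Matrix.mul_apply, Fin.sum_univ_succ] <;> field_simp <;> linarith
  have hle : (!![A, B; B, C] : Matrix (Fin 2) (Fin 2) ℝ).rank ≤ 1 := by
    rw [hfac]
    exact le_trans (Matrix.rank_mul_le_left _ _)
      (by simpa using Matrix.rank_le_card_width (!![A; B] : Matrix (Fin 2) (Fin 1) ℝ))
  have hne : (!![A, B; B, C] : Matrix (Fin 2) (Fin 2) ℝ).rank ≠ 0 := by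
    intro h0
    rw [Matrix.rank] at h0
    rw [Submodule.finrank_eq_zero, LinearMap.range_eq_bot] at h0
    have h1 := congrFun (congrFun (congrArg DFunLike.coe h0) ![1, 0]) 0
    simp [Matrix.mulVecLin, Matrix.mulVec, dotProduct, Fin.sum_univ_succ] at h1
    exact hA h1
  omega

/-- The Hessian of `M(ξ) = -((m-1)/m)(-ξ₁)^{m/(m-1)}/ξ₂^{1/(m-1)}` has rank exactly one
at every point of the cone `ξ₁ < 0, ξ₂ > 0`. -/
theorem hessian_phaseM_rank_one (m : ℕ) (hm : 2 ≤ m) (a b : ℝ) (ha : a < 0) (hb : 0 < b) :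
    (hessian (phaseM m) a b).rank = 1 := by
  have h1 := hm1R hm
  have hna : (0:ℝ) < -a := by linarith
  set q : ℝ := 1/((m:ℝ)-1) with hq
  have hq0 : 0 < q := by rw [hq]; positivity
  rw [hessian, pd1_pd1_phaseM hm ha hb, pd2_pd1_phaseM hm ha hb,
    pd1_pd2_phaseM hm ha hb, pd2_pd2_phaseM hm ha hb]
  apply rank_one_aux
  · have : 0 < q * (-a) ^ (q - 1) / b ^ q := by
      have := Real.rpow_pos_of_pos hna (q - 1)
      have := Real.rpow_pos_of_pos hb q
      positivity
    intro hcon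
    rw [neg_eq_zero] at hcon
    exact this.ne' hcon
  · have e1 : (-a) ^ (q - 1) * (-a) ^ (q + 1) = (-a) ^ q * (-a) ^ q := by
      rw [← Real.rpow_add hna, ← Real.rpow_add hna]; congr 1; ring
    have e2 : b ^ q * b ^ (q + 2) = b ^ (q + 1) * b ^ (q + 1) := by
      rw [← Real.rpow_add hb, ← Real.rpow_add hb]; congr 1; ring
    rw [neg_mul_neg, neg_mul_neg, div_mul_div_comm, div_mul_div_comm, e2]
    congr 1
    linear_combination q * q * e1
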